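/- For every fixed τ ∈ ℝ, v_{Δ,τ} → Γ Σ Γ^⊤ entrywise as Δ → ∞, where Γ = (Id−K)^{-1}; and for every fixed τ ≠ 0, v_{Δ,τ} → 0 entrywise as Δ → 0. -/

import Mathlib

open MeasureTheory Set Filter Topology
open scoped ENNReal NNReal

lemma summable_pow_of_specRad_lt_one {A : Type*} [NormedRing A] [NormedAlgebra ℂ A]
    [CompleteSpace A] (a : A) (h : spectralRadius ℂ a < 1) : Summable (fun n => a ^ n) := by
  obtain ⟨r, hρr, hr1⟩ := ENNReal.lt_iff_exists_nnreal_btwn.mp h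
  have hg := spectrum.pow_nnnorm_pow_one_div_tendsto_nhds_spectralRadius a
  have hev : ∀ᶠ n : ℕ in atTop, (‖a ^ n‖₊ : ℝ≥0∞) ^ (1 / (n : ℝ)) < (r : ℝ≥0∞) :=
    hg.eventually_lt_const hρr
  have hr1' : (r : ℝ) < 1 := by exact_mod_cast hr1
  apply Summable.of_norm_bounded_eventually (g := fun n => (r : ℝ) ^ n)
    (summable_geometric_of_lt_one r.coe_nonneg hr1')
  rw [Nat.cofinite_eq_atTop]
  filter_upwards [hev, eventually_ge_atTop 1] with n hn hn1
  have hn0 : (n : ℝ) ≠ 0 := by positivity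
  have : ((‖a ^ n‖₊ : ℝ≥0∞) ^ (1 / (n : ℝ))) ^ (n : ℝ) < (r : ℝ≥0∞) ^ (n : ℝ) :=
    ENNReal.rpow_lt_rpow hn (by positivity)
  rw [← ENNReal.rpow_mul, one_div, inv_mul_cancel₀ hn0, ENNReal.rpow_one] at this
  have h2 : (‖a ^ n‖₊ : ℝ≥0∞) < ((r ^ n : ℝ≥0) : ℝ≥0∞) := by
    rwa [ENNReal.coe_pow, ← ENNReal.rpow_natCast]
  have h3 : ‖a ^ n‖₊ < r ^ n := by exact_mod_cast h2
  calc ‖a ^ n‖ ≤ ((r ^ n : ℝ≥0) : ℝ) := le_of_lt h3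
    _ = (r : ℝ) ^ n := by push_cast; ring

lemma geom_inv_of_summable {A : Type*} [NormedRing A] [CompleteSpace A] (a : A)
    (hsum : Summable (fun n => a ^ n)) :
    (1 - a) * (∑' n, a ^ n) = 1 ∧ (∑' n, a ^ n) * (1 - a) = 1 := by
  have hshift : ∑' n, a ^ (n + 1) = (∑' n, a ^ n) - 1 := by
    have := Summable.tsum_eq_zero_add hsum
    rw [pow_zero] at this
    rw [this]; abel
  constructor
  · rw [sub_mul, one_mul, ← hsum.tsum_mul_left a, sub_eq_iff_eq_add]
    have : ∀ n : ℕ, a * a ^ n = a ^ (n + 1) := fun n => (pow_succ' a n).symm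
    rw [tsum_congr this, hshift]; abel
  · rw [mul_sub, mul_one, ← hsum.tsum_mul_right a, sub_eq_iff_eq_add]
    have : ∀ n : ℕ, a ^ n * a = a ^ (n + 1) := fun n => (pow_succ a n).symm
    rw [tsum_congr this, hshift]; abel

lemma real_matrix_geom {d : ℕ} (K : Matrix (Fin d) (Fin d) ℝ)
    (h : spectralRadius ℂ (K.map fun x : ℝ => (x : ℂ)) < 1) :
    ∃ S : Matrix (Fin d) (Fin d) ℝ, (1 - K) * S = 1 ∧ S * (1 - K) = 1 ∧
      ∀ i j, HasSum (fun n => (K ^ n) i j) (S i j) := by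
  letI : NormedRing (Matrix (Fin d) (Fin d) ℂ) := Matrix.linftyOpNormedRing
  letI : NormedAlgebra ℂ (Matrix (Fin d) (Fin d) ℂ) := Matrix.linftyOpNormedAlgebra
  letI : CompleteSpace (Matrix (Fin d) (Fin d) ℂ) := FiniteDimensional.complete ℂ _
  set f : Matrix (Fin d) (Fin d) ℝ →+* Matrix (Fin d) (Fin d) ℂ :=
    (Complex.ofRealHom.mapMatrix) with hf
  have hKc : K.map (fun x : ℝ => (x : ℂ)) = f K := rfl
  rw [hKc] at h
  have hsum : Summable (fun n => (f K) ^ n) := summable_pow_of_specRad_lt_one _ h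
  have hentrynorm : ∀ (M : Matrix (Fin d) (Fin d) ℂ) (i j : Fin d), ‖M i j‖ ≤ ‖M‖ := by
    intro M i j
    have h1 : ‖M i j‖₊ ≤ ∑ j', ‖M i j'‖₊ :=
      Finset.single_le_sum (f := fun j' => ‖M i j'‖₊) (fun _ _ => zero_le) (Finset.mem_univ j)
    have h2 : (∑ j', ‖M i j'‖₊) ≤ Finset.univ.sup (fun i => ∑ j', ‖M i j'‖₊) :=
      Finset.le_sup (f := fun i => ∑ j', ‖M i j'‖₊) (Finset.mem_univ i)
    have h3 := Matrix.linfty_opNNNorm_def M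
    exact_mod_cast h1.trans (h2.trans_eq h3.symm)
  have hcont : ∀ i j : Fin d, Continuous (fun M : Matrix (Fin d) (Fin d) ℂ => M i j) := by
    intro i j
    apply LipschitzWith.continuous (K := 1)
    apply LipschitzWith.of_dist_le_mul
    intro a b
    rw [NNReal.coe_one, one_mul, dist_eq_norm, dist_eq_norm]
    exact le_trans (by rw [Matrix.sub_apply]) (hentrynorm (a - b) i j)
  set Sc := ∑' n, (f K) ^ n with hSc
  have hentry : ∀ i j : Fin d, HasSum (fun n => ((K ^ n) i j : ℂ)) (Sc i j) := by
    intro i j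
    have := hsum.hasSum.map (AddMonoidHom.mk' (fun M : Matrix (Fin d) (Fin d) ℂ => M i j)
      (fun a b => rfl)) (hcont i j)
    have h6 : ∀ n : ℕ, ((f K) ^ n) i j = ((K ^ n) i j : ℂ) := by
      intro n; rw [← map_pow f K n]; rfl
    have h7 : HasSum (fun n => ((f K) ^ n) i j) (Sc i j) := this
    rw [show (fun n => ((f K) ^ n) i j) = fun n => ((K ^ n) i j : ℂ) from funext h6] at h7
    exact h7
  have hre : ∀ i j : Fin d, HasSum (fun n => (K ^ n) i j) ((Sc i j).re) := by
    intro i j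
    have := (hentry i j).mapL Complex.reCLM
    simpa using this
  refine ⟨Matrix.of fun i j => (Sc i j).re, ?_, ?_, fun i j => hre i j⟩
  all_goals {
    have hfS : f (Matrix.of fun i j => (Sc i j).re) = Sc := by
      ext i j
      have h1 : HasSum (fun n => ((K ^ n) i j : ℂ)) (((Sc i j).re : ℂ)) := by
        have := (hre i j).mapL Complex.ofRealCLM
        simpa using this
      have h2 := (hentry i j).unique h1
      simpa [hf] using h2.symm
    have hinj : Function.Injective f := by
      intro M N hMN
      ext i j
      have h5 : f M i j = f N i j := by rw [hMN]
      simpa [hf, RingHom.mapMatrix_apply, Matrix.map_apply] using h5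
    apply hinj
    rw [map_mul]
    first
    | (rw [show f (1 - K) = 1 - f K by rw [map_sub, map_one], hfS, map_one]
       exact (geom_inv_of_summable (f K) hsum).1)
    | (rw [show f (1 - K) = 1 - f K by rw [map_sub, map_one], hfS, map_one]
       exact (geom_inv_of_summable (f K) hsum).2)
  }

lemma conv_lintegral {f g : ℝ → ℝ} (hf : Measurable f) (hg : Measurable g) :
    ∫⁻ t in Ioi (0:ℝ), ∫⁻ s in Ioc (0:ℝ) t, ENNReal.ofReal (f (t - s)) * ENNReal.ofReal (g s) =
      (∫⁻ u in Ioi (0:ℝ), ENNReal.ofReal (f u)) * ∫⁻ s in Ioi (0:ℝ), ENNReal.ofReal (g s) := by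
  set F : ℝ → ℝ≥0∞ := fun t => ENNReal.ofReal (f t) with hF
  set G : ℝ → ℝ≥0∞ := fun s => ENNReal.ofReal (g s) with hG
  have hFm : Measurable F := ENNReal.measurable_ofReal.comp hf
  have hGm : Measurable G := ENNReal.measurable_ofReal.comp hg
  set J : ℝ → ℝ → ℝ≥0∞ := fun t s => (Ioc 0 t).indicator (fun s => F (t - s) * G s) s with hJ
  have hJm : Measurable (Function.uncurry J) := by
    have hset : MeasurableSet {p : ℝ × ℝ | p.2 ∈ Ioc 0 p.1} := by
      apply MeasurableSet.inter
      · exact measurable_snd measurableSet_Ioi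
      · exact measurableSet_le measurable_snd measurable_fst
    have : Function.uncurry J = {p : ℝ × ℝ | p.2 ∈ Ioc 0 p.1}.indicator
        (fun p => F (p.1 - p.2) * G p.2) := by
      funext p
      rcases p with ⟨t, s⟩
      change J t s = _
      by_cases h : s ∈ Ioc 0 t
      · rw [Set.indicator_of_mem (show (t, s) ∈ {p : ℝ × ℝ | p.2 ∈ Ioc 0 p.1} from h)
          (fun p : ℝ × ℝ => F (p.1 - p.2) * G p.2)]
        exact Set.indicator_of_mem h _
      · rw [Set.indicator_of_notMem (show (t, s) ∉ {p : ℝ × ℝ | p.2 ∈ Ioc 0 p.1} from h)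
          (fun p : ℝ × ℝ => F (p.1 - p.2) * G p.2)]
        exact Set.indicator_of_notMem h _
    rw [this]
    exact Measurable.indicator ((hFm.comp (measurable_fst.sub measurable_snd)).mul
      (hGm.comp measurable_snd)) hset
  have step1 : ∀ t : ℝ, ∫⁻ s in Ioc (0:ℝ) t, F (t - s) * G s = ∫⁻ s, J t s := by
    intro t
    rw [hJ, lintegral_indicator measurableSet_Ioc]
  have step2 : ∫⁻ t in Ioi (0:ℝ), ∫⁻ s, J t s = ∫⁻ t, ∫⁻ s, J t s := by
    rw [← lintegral_indicator measurableSet_Ioi]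
    congr 1
    funext t
    by_cases ht : t ∈ Ioi (0:ℝ)
    · rw [Set.indicator_of_mem ht]
    · rw [Set.indicator_of_notMem ht]
      have : Ioc (0:ℝ) t = ∅ := Ioc_eq_empty (by simpa using ht)
      simp [hJ, this]
  have step3 : ∫⁻ t, ∫⁻ s, J t s = ∫⁻ s, ∫⁻ t, J t s := by
    exact lintegral_lintegral_swap hJm.aemeasurable
  have step4 : ∀ s : ℝ, ∫⁻ t, J t s =
      (Ioi (0:ℝ)).indicator (fun s => G s * ∫⁻ u in Ioi (0:ℝ), F u) s := by
    intro s
    by_cases hs : s ∈ Ioi (0:ℝ)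
    · rw [Set.indicator_of_mem hs]
      have hJs : ∀ t, J t s = (Ici s).indicator (fun t => F (t - s)) t * G s := by
        intro t
        by_cases h : s ≤ t
        · rw [Set.indicator_of_mem (show t ∈ Ici s from h)]
          exact Set.indicator_of_mem (show s ∈ Ioc 0 t from ⟨hs, h⟩) _
        · rw [Set.indicator_of_notMem (show t ∉ Ici s from h), zero_mul]
          exact Set.indicator_of_notMem (show s ∉ Ioc 0 t from fun hc => h hc.2) _
      simp only [hJs]
      have hmeas : Measurable fun t : ℝ => (Ici s).indicator (fun t => F (t - s)) t :=
        (hFm.comp (measurable_id.sub measurable_const)).indicator measurableSet_Ici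
      rw [lintegral_mul_const (G s) hmeas]
      · rw [lintegral_indicator measurableSet_Ici]
        have hmp : MeasurePreserving (fun x : ℝ => x + s) volume volume :=
          measurePreserving_add_right volume s
        have hemb : MeasurableEmbedding (fun x : ℝ => x + s) :=
          (Homeomorph.addRight s).measurableEmbedding
        have := hmp.setLIntegral_comp_preimage_emb hemb (fun t => F (t - s)) (Ici s)
        have hpre : (fun x : ℝ => x + s) ⁻¹' Ici s = Ici 0 := by
          ext u; simp [le_add_iff_nonneg_left]
        rw [hpre] at this
        rw [← this]
        have : ∫⁻ u in Ici (0:ℝ), F (u + s - s) = ∫⁻ u in Ici (0:ℝ), F u := by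
          congr 1; funext u; rw [add_sub_cancel_right]
        rw [this, ← restrict_Ioi_eq_restrict_Ici, mul_comm]
    · rw [Set.indicator_of_notMem hs]
      have hJs : ∀ t, J t s = 0 := fun t =>
        Set.indicator_of_notMem (fun hc : s ∈ Ioc 0 t => hs hc.1) _
      simp [hJs]
  calc ∫⁻ t in Ioi (0:ℝ), ∫⁻ s in Ioc (0:ℝ) t, F (t - s) * G s
      = ∫⁻ t in Ioi (0:ℝ), ∫⁻ s, J t s := by simp only [step1]
    _ = ∫⁻ s, ∫⁻ t, J t s := by rw [step2, step3]
    _ = ∫⁻ s, (Ioi (0:ℝ)).indicator (fun s => G s * ∫⁻ u in Ioi (0:ℝ), F u) s := by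
        simp only [step4]
    _ = ∫⁻ s in Ioi (0:ℝ), G s * ∫⁻ u in Ioi (0:ℝ), F u := by
        rw [lintegral_indicator measurableSet_Ioi]
    _ = (∫⁻ u in Ioi (0:ℝ), F u) * ∫⁻ s in Ioi (0:ℝ), G s := by
        rw [lintegral_mul_const _ hGm, mul_comm]

noncomputable section

/-- `phiIter d φ n` is the `(n+1)`-fold convolution `φ_{n+1}` of the kernel matrix:
`φ_1 = φ` and `φ_{n+1}(t) = ∫_0^t φ(t−s) φ_n(s) ds`. -/
def phiIter (d : ℕ) (φ : Fin d → Fin d → ℝ → ℝ) : ℕ → Fin d → Fin d → ℝ → ℝ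
  | 0 => φ
  | n + 1 => fun i j t => ∑ k, ∫ s in Ioc (0 : ℝ) t, φ i k (t - s) * phiIter d φ n k j s

/-- `ψ = Σ_{n ≥ 1} φ_n`. -/
def psiFun (d : ℕ) (φ : Fin d → Fin d → ℝ → ℝ) (i j : Fin d) (t : ℝ) : ℝ :=
  ∑' n, phiIter d φ n i j t

/-- The matrix `K = ∫_0^∞ φ(t) dt`. -/
def Kmat (d : ℕ) (φ : Fin d → Fin d → ℝ → ℝ) : Matrix (Fin d) (Fin d) ℝ :=
  Matrix.of fun i j => ∫ t in Ioi (0 : ℝ), φ i j t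

/-- Assumption (A1): the kernels are integrable and the spectral radius of `K`
is strictly less than one. -/
def A1 (d : ℕ) (φ : Fin d → Fin d → ℝ → ℝ) : Prop :=
  (∀ i j, IntegrableOn (φ i j) (Ioi 0)) ∧
    spectralRadius ℂ ((Kmat d φ).map fun x : ℝ => (x : ℂ)) < 1

/-- The diagonal matrix `Σ` with `Σ_{ii} = ((Id−K)⁻¹ μ)_i`. -/
def SigMat (d : ℕ) (φ : Fin d → Fin d → ℝ → ℝ) (μ : Fin d → ℝ) :
    Matrix (Fin d) (Fin d) ℝ :=
  Matrix.diagonal fun i => (1 - Kmat d φ)⁻¹.mulVec μ i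

/-- The `(i,k)` entry of the matrix-valued measure `Id δ₀(ds) + ψ(s) ds` on `[0,∞)`. -/
def rowMeas (d : ℕ) (φ : Fin d → Fin d → ℝ → ℝ) (i k : Fin d) : Measure ℝ :=
  (if i = k then Measure.dirac 0 else 0) +
    (volume.restrict (Ioi 0)).withDensity fun s => ENNReal.ofReal (psiFun d φ i k s)

/-- The matrix `v_{Δ,τ} = ∫_{[0,∞)²} (1 − |t−s−τ|/Δ)⁺
(Id δ₀(ds) + ψ(s) ds) Σ (Id δ₀(dt) + ψ(t)ᵀ dt)`. -/
def vMat (d : ℕ) (φ : Fin d → Fin d → ℝ → ℝ) (μ : Fin d → ℝ) (Δ τ : ℝ) :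
    Matrix (Fin d) (Fin d) ℝ :=
  Matrix.of fun i j => ∑ k, ∑ l, SigMat d φ μ k l *
    ∫ s, (∫ t, max (1 - |t - s - τ| / Δ) 0 ∂(rowMeas d φ j l)) ∂(rowMeas d φ i k)

section Lemmas

variable {d : ℕ} {φ : Fin d → Fin d → ℝ → ℝ}

lemma phiIter_nonneg (hnn : ∀ i j t, 0 ≤ φ i j t) :
    ∀ n i j t, 0 ≤ phiIter d φ n i j t := by
  intro n
  induction n with
  | zero => exact hnn
  | succ n ih =>
    intro i j t
    apply Finset.sum_nonneg
    intro k _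
    apply setIntegral_nonneg measurableSet_Ioc
    intro s _
    exact mul_nonneg (hnn i k (t - s)) (ih k j s)

lemma phiIter_measurable (hm : ∀ i j, Measurable (φ i j)) :
    ∀ n i j, Measurable (phiIter d φ n i j) := by
  intro n
  induction n with
  | zero => exact hm
  | succ n ih =>
    intro i j
    apply Finset.measurable_sum
    intro k _
    have hFm : StronglyMeasurable fun p : ℝ × ℝ =>
        {q : ℝ × ℝ | q.2 ∈ Ioc 0 q.1}.indicator
          (fun q => φ i k (q.1 - q.2) * phiIter d φ n k j q.2) p := by
      apply Measurable.stronglyMeasurable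
      apply Measurable.indicator
      · exact ((hm i k).comp (measurable_fst.sub measurable_snd)).mul
          ((ih k j).comp measurable_snd)
      · exact (measurable_snd measurableSet_Ioi).inter
          (measurableSet_le measurable_snd measurable_fst)
    have := hFm.integral_prod_right' (ν := volume)
    have heq : ∀ t : ℝ, (∫ s, {q : ℝ × ℝ | q.2 ∈ Ioc 0 q.1}.indicator
        (fun q => φ i k (q.1 - q.2) * phiIter d φ n k j q.2) (t, s)) =
        ∫ s in Ioc 0 t, φ i k (t - s) * phiIter d φ n k j s := by
      intro t
      rw [← integral_indicator measurableSet_Ioc]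
      rfl
    have h2 : Measurable fun t : ℝ => ∫ s, {q : ℝ × ℝ | q.2 ∈ Ioc 0 q.1}.indicator
        (fun q => φ i k (q.1 - q.2) * phiIter d φ n k j q.2) (t, s) := this.measurable
    simpa only [heq] using h2

lemma Kmat_nonneg (hnn : ∀ i j t, 0 ≤ φ i j t) (i j : Fin d) : 0 ≤ Kmat d φ i j :=
  setIntegral_nonneg measurableSet_Ioi (fun t _ => hnn i j t)

lemma Kmat_pow_nonneg (hnn : ∀ i j t, 0 ≤ φ i j t) :
    ∀ (n : ℕ) (i j : Fin d), 0 ≤ (Kmat d φ ^ (n + 1)) i j := by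
  intro n
  induction n with
  | zero => intro i j; rw [pow_one]; exact Kmat_nonneg hnn i j
  | succ n ih =>
    intro i j
    rw [pow_succ', Matrix.mul_apply]
    exact Finset.sum_nonneg fun k _ => mul_nonneg (Kmat_nonneg hnn i k) (ih k j)

lemma lk_measurable (hm : ∀ i j, Measurable (φ i j)) (hg : Measurable g) (i k : Fin d) :
    Measurable fun t : ℝ => ∫⁻ s in Ioc (0:ℝ) t,
      ENNReal.ofReal (φ i k (t - s)) * ENNReal.ofReal (g s) := by
  set Jf : ℝ × ℝ → ℝ≥0∞ := {q : ℝ × ℝ | q.2 ∈ Ioc 0 q.1}.indicator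
    (fun q => ENNReal.ofReal (φ i k (q.1 - q.2)) * ENNReal.ofReal (g q.2)) with hJf
  have hJm : Measurable Jf := by
    apply Measurable.indicator
    · exact ((ENNReal.measurable_ofReal.comp ((hm i k).comp
        (measurable_fst.sub measurable_snd)))).mul
        (ENNReal.measurable_ofReal.comp (hg.comp measurable_snd))
    · exact (measurable_snd measurableSet_Ioi).inter
        (measurableSet_le measurable_snd measurable_fst)
  have h2 := hJm.lintegral_prod_right' (ν := volume)
  have heq : ∀ t : ℝ, (∫⁻ s, Jf (t, s)) =
      ∫⁻ s in Ioc (0:ℝ) t, ENNReal.ofReal (φ i k (t - s)) * ENNReal.ofReal (g s) := by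
    intro t
    rw [← lintegral_indicator measurableSet_Ioc]
    rfl
  simpa only [heq] using h2

lemma phiIter_lintegral (hm : ∀ i j, Measurable (φ i j)) (hnn : ∀ i j t, 0 ≤ φ i j t)
    (hint : ∀ i j, IntegrableOn (φ i j) (Ioi 0)) :
    ∀ n i j, (∫⁻ t in Ioi (0:ℝ), ENNReal.ofReal (phiIter d φ n i j t)) =
      ENNReal.ofReal ((Kmat d φ ^ (n + 1)) i j) := by
  have hbase : ∀ i j, ∫⁻ t in Ioi (0:ℝ), ENNReal.ofReal (φ i j t)
      = ENNReal.ofReal (Kmat d φ i j) := fun i j =>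
    (ofReal_integral_eq_lintegral_ofReal (hint i j)
      (Eventually.of_forall fun t => hnn i j t)).symm
  intro n
  induction n with
  | zero => intro i j; rw [pow_one]; exact hbase i j
  | succ n ih =>
    intro i j
    set g : Fin d → ℝ → ℝ := fun k => phiIter d φ n k j with hgdef
    have hgm : ∀ k, Measurable (g k) := fun k => phiIter_measurable hm n k j
    have hgnn : ∀ k s, 0 ≤ g k s := fun k s => phiIter_nonneg hnn n k j s
    set L : Fin d → ℝ → ℝ≥0∞ := fun k t => ∫⁻ s in Ioc (0:ℝ) t,
      ENNReal.ofReal (φ i k (t - s)) * ENNReal.ofReal (g k s) with hLdef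
    have hLm : ∀ k, Measurable (L k) := fun k => lk_measurable hm (hgm k) i k
    have key : ∀ k, ∫⁻ t in Ioi (0:ℝ), L k t =
        ENNReal.ofReal (Kmat d φ i k) * ENNReal.ofReal ((Kmat d φ ^ (n + 1)) k j) := by
      intro k
      rw [hLdef]
      rw [conv_lintegral (hm i k) (hgm k), hbase i k, ih k j]
    have hfin : ∀ᵐ t ∂(volume.restrict (Ioi (0:ℝ))), ∀ k, L k t < ⊤ := by
      rw [ae_all_iff]
      intro k
      apply ae_lt_top (hLm k)
      rw [key k]
      exact ENNReal.mul_ne_top ENNReal.ofReal_ne_top ENNReal.ofReal_ne_top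
    have hae : ∀ᵐ t ∂(volume.restrict (Ioi (0:ℝ))),
        ENNReal.ofReal (phiIter d φ (n + 1) i j t) = ∑ k, L k t := by
      filter_upwards [hfin] with t ht
      have hIeq : ∀ k, ENNReal.ofReal (∫ s in Ioc (0:ℝ) t, φ i k (t - s) * g k s) = L k t := by
        intro k
        have hmeas : Measurable fun s => φ i k (t - s) * g k s :=
          ((hm i k).comp (measurable_const.sub measurable_id)).mul (hgm k)
        have hlif : ∫⁻ s in Ioc (0:ℝ) t, ENNReal.ofReal (φ i k (t - s) * g k s) = L k t := by
          rw [hLdef]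
          congr 1
          funext s
          rw [ENNReal.ofReal_mul (hnn i k (t - s))]
        have hInt : IntegrableOn (fun s => φ i k (t - s) * g k s) (Ioc (0:ℝ) t) := by
          refine ⟨hmeas.aestronglyMeasurable, ?_⟩
          rw [hasFiniteIntegral_iff_ofReal (Eventually.of_forall fun s =>
            mul_nonneg (hnn i k (t - s)) (hgnn k s))]
          rw [hlif]
          exact ht k
        rw [ofReal_integral_eq_lintegral_ofReal hInt (Eventually.of_forall fun s =>
          mul_nonneg (hnn i k (t - s)) (hgnn k s)), hlif]
      calc ENNReal.ofReal (phiIter d φ (n + 1) i j t)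
          = ENNReal.ofReal (∑ k, ∫ s in Ioc (0:ℝ) t, φ i k (t - s) * g k s) := rfl
        _ = ∑ k, ENNReal.ofReal (∫ s in Ioc (0:ℝ) t, φ i k (t - s) * g k s) :=
            ENNReal.ofReal_sum_of_nonneg fun k _ => setIntegral_nonneg measurableSet_Ioc
              fun s _ => mul_nonneg (hnn i k (t - s)) (hgnn k s)
        _ = ∑ k, L k t := by simp only [hIeq]
    rw [lintegral_congr_ae hae, lintegral_finset_sum _ (fun k _ => hLm k)]
    simp only [key]
    calc ∑ k, ENNReal.ofReal (Kmat d φ i k) * ENNReal.ofReal ((Kmat d φ ^ (n + 1)) k j)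
        = ∑ k, ENNReal.ofReal (Kmat d φ i k * (Kmat d φ ^ (n + 1)) k j) :=
          Finset.sum_congr rfl fun k _ => (ENNReal.ofReal_mul (Kmat_nonneg hnn i k)).symm
      _ = ENNReal.ofReal (∑ k, Kmat d φ i k * (Kmat d φ ^ (n + 1)) k j) :=
          (ENNReal.ofReal_sum_of_nonneg fun k _ =>
            mul_nonneg (Kmat_nonneg hnn i k) (Kmat_pow_nonneg hnn n k j)).symm
      _ = ENNReal.ofReal ((Kmat d φ ^ (n + 1 + 1)) i j) := by
          conv_rhs => rw [pow_succ', Matrix.mul_apply]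

lemma phiIter_integrableOn (hm : ∀ i j, Measurable (φ i j)) (hnn : ∀ i j t, 0 ≤ φ i j t)
    (hint : ∀ i j, IntegrableOn (φ i j) (Ioi 0)) (n : ℕ) (i j : Fin d) :
    IntegrableOn (phiIter d φ n i j) (Ioi 0) := by
  refine ⟨(phiIter_measurable hm n i j).aestronglyMeasurable, ?_⟩
  rw [hasFiniteIntegral_iff_ofReal (Eventually.of_forall fun t => phiIter_nonneg hnn n i j t)]
  rw [phiIter_lintegral hm hnn hint n i j]
  exact ENNReal.ofReal_lt_top

lemma Kpow_entry_nonneg (hnn : ∀ i j t, 0 ≤ φ i j t) (n : ℕ) (i j : Fin d) :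
    0 ≤ (Kmat d φ ^ n) i j := by
  cases n with
  | zero =>
    rw [pow_zero, Matrix.one_apply]
    split <;> norm_num
  | succ n => exact Kmat_pow_nonneg hnn n i j

section WithS

variable {S : Matrix (Fin d) (Fin d) ℝ}
  (hSsum : ∀ i j, HasSum (fun n => (Kmat d φ ^ n) i j) (S i j))

include hSsum

lemma S_shift_hasSum (i j : Fin d) :
    HasSum (fun n => (Kmat d φ ^ (n + 1)) i j)
      (S i j - (1 : Matrix (Fin d) (Fin d) ℝ) i j) := by
  have h := (hasSum_nat_add_iff' (f := fun n => (Kmat d φ ^ n) i j) 1).mpr (hSsum i j)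
  simpa using h

lemma S_sub_one_nonneg (hnn : ∀ i j t, 0 ≤ φ i j t) (i j : Fin d) :
    0 ≤ S i j - (1 : Matrix (Fin d) (Fin d) ℝ) i j := by
  rw [← (S_shift_hasSum hSsum i j).tsum_eq]
  exact tsum_nonneg fun n => Kmat_pow_nonneg hnn n i j

lemma S_entry_nonneg (hnn : ∀ i j t, 0 ≤ φ i j t) (i j : Fin d) : 0 ≤ S i j := by
  rw [← (hSsum i j).tsum_eq]
  exact tsum_nonneg fun n => Kpow_entry_nonneg hnn n i j

lemma psi_lintegral (hm : ∀ i j, Measurable (φ i j)) (hnn : ∀ i j t, 0 ≤ φ i j t)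
    (hint : ∀ i j, IntegrableOn (φ i j) (Ioi 0)) (i j : Fin d) :
    ∫⁻ t in Ioi (0:ℝ), ENNReal.ofReal (psiFun d φ i j t) =
      ENNReal.ofReal (S i j - (1 : Matrix (Fin d) (Fin d) ℝ) i j) := by
  set G : ℝ → ℝ≥0∞ := fun t => ∑' n, ENNReal.ofReal (phiIter d φ n i j t) with hGdef
  have hGm : Measurable G := Measurable.ennreal_tsum fun n =>
    (phiIter_measurable hm n i j).ennreal_ofReal
  have hGint : ∫⁻ t in Ioi (0:ℝ), G t =
      ENNReal.ofReal (S i j - (1 : Matrix (Fin d) (Fin d) ℝ) i j) := by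
    simp only [hGdef]
    rw [lintegral_tsum (fun n =>
      ((phiIter_measurable hm n i j).ennreal_ofReal).aemeasurable)]
    simp only [phiIter_lintegral hm hnn hint]
    rw [← ENNReal.ofReal_tsum_of_nonneg (fun n => Kmat_pow_nonneg hnn n i j)
      (S_shift_hasSum hSsum i j).summable]
    rw [(S_shift_hasSum hSsum i j).tsum_eq]
  have hψ : ∀ t, psiFun d φ i j t = (G t).toReal := by
    intro t
    rw [ENNReal.tsum_toReal_eq (fun n => ENNReal.ofReal_ne_top)]
    unfold psiFun
    congr 1
    funext n
    rw [ENNReal.toReal_ofReal (phiIter_nonneg hnn n i j t)]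
  have haeeq : (fun t => ENNReal.ofReal (psiFun d φ i j t)) =ᵐ[volume.restrict (Ioi 0)] G := by
    have hfin := ae_lt_top hGm (by rw [hGint]; exact ENNReal.ofReal_ne_top)
    filter_upwards [hfin] with t ht
    rw [hψ t, ENNReal.ofReal_toReal ht.ne]
  rw [lintegral_congr_ae haeeq, hGint]

lemma rowMeas_mass (hm : ∀ i j, Measurable (φ i j)) (hnn : ∀ i j t, 0 ≤ φ i j t)
    (hint : ∀ i j, IntegrableOn (φ i j) (Ioi 0)) (i k : Fin d) :
    rowMeas d φ i k univ = ENNReal.ofReal (S i k) := by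
  unfold rowMeas
  rw [Measure.add_apply]
  rw [withDensity_apply _ MeasurableSet.univ, Measure.restrict_univ]
  rw [psi_lintegral hSsum hm hnn hint i k]
  by_cases h : i = k
  · subst h
    simp only [if_pos rfl, Measure.dirac_apply_of_mem (mem_univ (0:ℝ))]
    have h1 : (1 : Matrix (Fin d) (Fin d) ℝ) i i = 1 := Matrix.one_apply_eq i
    have : S i i = 1 + (S i i - 1) := by ring
    rw [h1]
    rw [show ENNReal.ofReal (S i i) = ENNReal.ofReal (1 + (S i i - 1)) by rw [← this]]
    rw [ENNReal.ofReal_add (by norm_num) (by have := S_sub_one_nonneg hSsum hnn i i; rwa [h1] at this)]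
    simp
  · have h0 : (1 : Matrix (Fin d) (Fin d) ℝ) i k = 0 := Matrix.one_apply_ne h
    simp only [if_neg h, h0, sub_zero, Measure.coe_zero, Pi.zero_apply, zero_add]

lemma rowMeas_finite (hm : ∀ i j, Measurable (φ i j)) (hnn : ∀ i j t, 0 ≤ φ i j t)
    (hint : ∀ i j, IntegrableOn (φ i j) (Ioi 0)) (i k : Fin d) :
    IsFiniteMeasure (rowMeas d φ i k) := by
  constructor
  rw [rowMeas_mass hSsum hm hnn hint i k]
  exact ENNReal.ofReal_lt_top

end WithS

lemma rowMeas_singleton (i k : Fin d) {x : ℝ} (hx : x ≠ 0) : rowMeas d φ i k {x} = 0 := by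
  unfold rowMeas
  rw [Measure.add_apply]
  have h1 : (if i = k then Measure.dirac (0:ℝ) else 0) {x} = 0 := by
    split
    · rw [Measure.dirac_apply' _ (measurableSet_singleton x)]
      simp [Ne.symm hx]
    · simp
  have h2 : ((volume.restrict (Ioi (0:ℝ))).withDensity
      fun s => ENNReal.ofReal (psiFun d φ i k s)) {x} = 0 := by
    rw [withDensity_apply _ (measurableSet_singleton x)]
    apply setLIntegral_measure_zero
    exact le_antisymm (le_trans (Measure.restrict_apply_le _ _) (by simp)) (zero_le)
  rw [h1, h2, add_zero]

lemma triang_continuous (Δ τ : ℝ) :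
    Continuous fun p : ℝ × ℝ => max (1 - |p.2 - p.1 - τ| / Δ) 0 :=
  (continuous_const.sub
    (((continuous_snd.sub continuous_fst).sub continuous_const).abs.div_const Δ)).max
    continuous_const

lemma triang_integrable {μm ν : Measure ℝ} [IsFiniteMeasure μm] [IsFiniteMeasure ν]
    {Δ : ℝ} (hΔ : 0 < Δ) (τ : ℝ) :
    Integrable (fun p : ℝ × ℝ => max (1 - |p.2 - p.1 - τ| / Δ) 0) (μm.prod ν) := by
  apply Integrable.mono' (integrable_const (1:ℝ))
  · exact (triang_continuous Δ τ).aestronglyMeasurable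
  · apply Eventually.of_forall
    intro p
    have h0 : (0:ℝ) ≤ max (1 - |p.2 - p.1 - τ| / Δ) 0 := le_max_right _ _
    rw [Real.norm_eq_abs, abs_of_nonneg h0]
    apply max_le _ (by norm_num)
    have : 0 ≤ |p.2 - p.1 - τ| / Δ := div_nonneg (abs_nonneg _) hΔ.le
    linarith

lemma iterated_eq_prod {μm ν : Measure ℝ} [IsFiniteMeasure μm] [IsFiniteMeasure ν]
    {Δ : ℝ} (hΔ : 0 < Δ) (τ : ℝ) :
    (∫ s, ∫ t, max (1 - |t - s - τ| / Δ) 0 ∂ν ∂μm) =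
      ∫ p : ℝ × ℝ, max (1 - |p.2 - p.1 - τ| / Δ) 0 ∂(μm.prod ν) :=
  integral_integral (triang_integrable hΔ τ)

lemma inner_tendsto_atTop {μm ν : Measure ℝ} [IsFiniteMeasure μm] [IsFiniteMeasure ν]
    {a b : ℝ} (hm1 : μm univ = ENNReal.ofReal a) (hm2 : ν univ = ENNReal.ofReal b)
    (ha : 0 ≤ a) (hb : 0 ≤ b) (τ : ℝ) :
    Tendsto (fun Δ : ℝ => ∫ s, ∫ t, max (1 - |t - s - τ| / Δ) 0 ∂ν ∂μm) atTop
      (𝓝 (a * b)) := by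
  have hDCT : Tendsto (fun Δ : ℝ =>
      ∫ p : ℝ × ℝ, max (1 - |p.2 - p.1 - τ| / Δ) 0 ∂(μm.prod ν)) atTop
      (𝓝 (∫ _ : ℝ × ℝ, (1:ℝ) ∂(μm.prod ν))) := by
    apply tendsto_integral_filter_of_dominated_convergence (fun _ => (1:ℝ))
    · exact Eventually.of_forall fun Δ => (triang_continuous Δ τ).aestronglyMeasurable
    · filter_upwards [eventually_gt_atTop (0:ℝ)] with Δ hΔ
      apply Eventually.of_forall
      intro p
      have h0 : (0:ℝ) ≤ max (1 - |p.2 - p.1 - τ| / Δ) 0 := le_max_right _ _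
      rw [Real.norm_eq_abs, abs_of_nonneg h0]
      apply max_le _ (by norm_num)
      have : 0 ≤ |p.2 - p.1 - τ| / Δ := div_nonneg (abs_nonneg _) hΔ.le
      linarith
    · exact integrable_const 1
    · apply Eventually.of_forall
      intro p
      have h1 : Tendsto (fun Δ : ℝ => |p.2 - p.1 - τ| / Δ) atTop (𝓝 0) :=
        Tendsto.div_atTop tendsto_const_nhds tendsto_id
      have h2 : Tendsto (fun Δ : ℝ => 1 - |p.2 - p.1 - τ| / Δ) atTop (𝓝 1) := by
        have := tendsto_const_nhds (x := (1:ℝ)) (f := atTop (α := ℝ)) |>.sub h1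
        simpa using this
      have h3 := h2.max (tendsto_const_nhds (x := (0:ℝ)))
      rw [max_eq_left (by norm_num : (0:ℝ) ≤ 1)] at h3
      exact h3
  have hval : (∫ _ : ℝ × ℝ, (1:ℝ) ∂(μm.prod ν)) = a * b := by
    rw [integral_const, smul_eq_mul, mul_one]
    rw [← univ_prod_univ, measureReal_def, Measure.prod_prod, hm1, hm2]
    rw [← ENNReal.ofReal_mul ha, ENNReal.toReal_ofReal (mul_nonneg ha hb)]
  rw [hval] at hDCT
  apply hDCT.congr'
  filter_upwards [eventually_gt_atTop (0:ℝ)] with Δ hΔ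
  exact (iterated_eq_prod hΔ τ).symm

lemma inner_tendsto_zero {μm ν : Measure ℝ} [IsFiniteMeasure μm] [IsFiniteMeasure ν]
    {τ : ℝ} (hν : ∀ x : ℝ, x ≠ 0 → ν {x} = 0) (hμτ : μm {-τ} = 0) :
    Tendsto (fun Δ : ℝ => ∫ s, ∫ t, max (1 - |t - s - τ| / Δ) 0 ∂ν ∂μm) (𝓝[>] 0)
      (𝓝 0) := by
  have hNmeas : MeasurableSet {p : ℝ × ℝ | p.2 - p.1 - τ = 0} :=
    ((continuous_snd.sub continuous_fst).sub continuous_const).measurable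
      (measurableSet_singleton 0)
  have hNnull : (μm.prod ν) {p : ℝ × ℝ | p.2 - p.1 - τ = 0} = 0 := by
    rw [Measure.prod_apply hNmeas]
    have hpre : ∀ s : ℝ, (Prod.mk s ⁻¹' {p : ℝ × ℝ | p.2 - p.1 - τ = 0}) = {s + τ} := by
      intro s
      ext t
      simp only [mem_preimage, mem_setOf_eq, mem_singleton_iff]
      constructor
      · intro h; linarith
      · intro h; rw [h]; ring
    have hbound : ∀ s : ℝ, ν (Prod.mk s ⁻¹' {p : ℝ × ℝ | p.2 - p.1 - τ = 0}) ≤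
        ({-τ} : Set ℝ).indicator (fun _ => (⊤ : ℝ≥0∞)) s := by
      intro s
      rw [hpre s]
      by_cases h : s = -τ
      · rw [Set.indicator_of_mem (by simpa using h)]
        exact le_top
      · rw [Set.indicator_of_notMem (by simpa using h)]
        rw [hν (s + τ) (fun hc => h (by linarith))]
    refine le_antisymm ?_ (zero_le)
    calc ∫⁻ s, ν (Prod.mk s ⁻¹' {p : ℝ × ℝ | p.2 - p.1 - τ = 0}) ∂μm
        ≤ ∫⁻ s, ({-τ} : Set ℝ).indicator (fun _ => (⊤ : ℝ≥0∞)) s ∂μm :=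
          lintegral_mono hbound
      _ = ⊤ * μm {-τ} := by
          rw [lintegral_indicator (measurableSet_singleton _)]
          simp [lintegral_const]
      _ = 0 := by rw [hμτ, mul_zero]
  have hDCT : Tendsto (fun Δ : ℝ =>
      ∫ p : ℝ × ℝ, max (1 - |p.2 - p.1 - τ| / Δ) 0 ∂(μm.prod ν)) (𝓝[>] 0)
      (𝓝 (∫ _ : ℝ × ℝ, (0:ℝ) ∂(μm.prod ν))) := by
    apply tendsto_integral_filter_of_dominated_convergence (fun _ => (1:ℝ))
    · exact Eventually.of_forall fun Δ => (triang_continuous Δ τ).aestronglyMeasurable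
    · filter_upwards [self_mem_nhdsWithin] with Δ hΔ
      apply Eventually.of_forall
      intro p
      have hΔ' : (0:ℝ) < Δ := hΔ
      have h0 : (0:ℝ) ≤ max (1 - |p.2 - p.1 - τ| / Δ) 0 := le_max_right _ _
      rw [Real.norm_eq_abs, abs_of_nonneg h0]
      apply max_le _ (by norm_num)
      have : 0 ≤ |p.2 - p.1 - τ| / Δ := div_nonneg (abs_nonneg _) hΔ'.le
      linarith
    · exact integrable_const 1
    · rw [← compl_mem_ae_iff] at hNnull
      filter_upwards [hNnull] with p hp
      have hc : p.2 - p.1 - τ ≠ 0 := hp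
      have habs : 0 < |p.2 - p.1 - τ| := abs_pos.mpr hc
      have h1 : Tendsto (fun Δ : ℝ => |p.2 - p.1 - τ| / Δ) (𝓝[>] 0) atTop := by
        simp only [div_eq_mul_inv]
        exact Tendsto.const_mul_atTop habs tendsto_inv_nhdsGT_zero
      apply Tendsto.congr' _ (tendsto_const_nhds (x := (0:ℝ)))
      filter_upwards [h1.eventually_ge_atTop 1] with Δ hΔ
      exact (max_eq_right (by linarith)).symm
  have hval : (∫ _ : ℝ × ℝ, (0:ℝ) ∂(μm.prod ν)) = 0 := integral_zero _ _
  rw [hval] at hDCT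
  apply hDCT.congr'
  filter_upwards [self_mem_nhdsWithin] with Δ hΔ
  exact (iterated_eq_prod (by exact hΔ) τ).symm

end Lemmas

/-- For fixed `τ`, `v_{Δ,τ} → Γ Σ Γᵀ` entrywise as `Δ → ∞`, with `Γ = (Id−K)⁻¹`;
and for fixed `τ ≠ 0`, `v_{Δ,τ} → 0` entrywise as `Δ → 0`. -/
theorem vMat_limits (d : ℕ) (φ : Fin d → Fin d → ℝ → ℝ)
    (hφmeas : ∀ i j, Measurable (φ i j)) (hφnonneg : ∀ i j t, 0 ≤ φ i j t)
    (hA1 : A1 d φ) (μ : Fin d → ℝ) (hμ : ∀ i, 0 ≤ μ i) :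
    (∀ τ : ℝ, ∀ i j, Tendsto (fun Δ : ℝ => vMat d φ μ Δ τ i j) atTop
      (𝓝 (((1 - Kmat d φ)⁻¹ * SigMat d φ μ * ((1 - Kmat d φ)⁻¹).transpose) i j))) ∧
    (∀ τ : ℝ, τ ≠ 0 → ∀ i j,
      Tendsto (fun Δ : ℝ => vMat d φ μ Δ τ i j) (𝓝[>] 0) (𝓝 0)) := by
  obtain ⟨hint, hspec⟩ := hA1
  obtain ⟨S, hS1, hS2, hSsum⟩ := real_matrix_geom (Kmat d φ) hspec
  have hGam : (1 - Kmat d φ)⁻¹ = S := Matrix.inv_eq_right_inv hS1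
  have hfm : ∀ i k, IsFiniteMeasure (rowMeas d φ i k) :=
    fun i k => rowMeas_finite hSsum hφmeas hφnonneg hint i k
  have hmass : ∀ i k, rowMeas d φ i k univ = ENNReal.ofReal (S i k) :=
    fun i k => rowMeas_mass hSsum hφmeas hφnonneg hint i k
  have hSnn : ∀ i k, 0 ≤ S i k := S_entry_nonneg hSsum hφnonneg
  have hvMat : ∀ (Δ τ : ℝ) (i j : Fin d), vMat d φ μ Δ τ i j = ∑ k, ∑ l, SigMat d φ μ k l *
      ∫ s, (∫ t, max (1 - |t - s - τ| / Δ) 0 ∂(rowMeas d φ j l)) ∂(rowMeas d φ i k) :=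
    fun Δ τ i j => rfl
  constructor
  · intro τ i j
    have htarget : ((1 - Kmat d φ)⁻¹ * SigMat d φ μ * ((1 - Kmat d φ)⁻¹).transpose) i j
        = ∑ k, ∑ l, SigMat d φ μ k l * (S i k * S j l) := by
      rw [hGam, Matrix.mul_apply]
      simp only [Matrix.mul_apply, Matrix.transpose_apply, Finset.sum_mul]
      rw [Finset.sum_comm]
      exact Finset.sum_congr rfl fun k _ => Finset.sum_congr rfl fun l _ => by ring
    rw [htarget]
    simp only [hvMat]
    apply tendsto_finset_sum
    intro k _
    apply tendsto_finset_sum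
    intro l _
    apply Filter.Tendsto.const_mul
    haveI := hfm i k; haveI := hfm j l
    exact inner_tendsto_atTop (hmass i k) (hmass j l) (hSnn i k) (hSnn j l) τ
  · intro τ hτ i j
    simp only [hvMat]
    have hlim : Tendsto (fun Δ : ℝ => ∑ k, ∑ l, SigMat d φ μ k l *
        ∫ s, (∫ t, max (1 - |t - s - τ| / Δ) 0 ∂(rowMeas d φ j l)) ∂(rowMeas d φ i k))
        (𝓝[>] 0) (𝓝 (∑ k : Fin d, ∑ l : Fin d, SigMat d φ μ k l * 0)) := by
      apply tendsto_finset_sum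
      intro k _
      apply tendsto_finset_sum
      intro l _
      apply Filter.Tendsto.const_mul
      haveI := hfm i k; haveI := hfm j l
      exact inner_tendsto_zero (fun x hx => rowMeas_singleton j l hx)
        (rowMeas_singleton i k (neg_ne_zero.mpr hτ))
    simpa using hlim
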